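/- arXiv:1112.4788 — 4 statements merged into one kernel-verified Lean document; each statement's English description precedes it below -/
import Mathlib

section
/- Let n ≥ 3 and let f : 2^{[n]} → ℝ be a polymatroid (nonnegative with f(∅)=0, monotone, submodular). Then for every i ∈ [n] (indices taken modulo n), the cycle inequality holds: f({i,i+1}) + Σ_{j ≠ i, i+1} f({j}) ≤ Σ_{j ≠ i} f({j,j+1}), where the sums range over j ∈ [n] with indices mod n. -/
open Fin.NatCast in
theorem cycle_inequality {n : ℕ} (hn : 3 ≤ n) (f : Finset (Fin n) → ℝ)
    (h0 : f ∅ = 0) (hnn : ∀ S, 0 ≤ f S)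
    (hmono : ∀ S T : Finset (Fin n), S ⊆ T → f S ≤ f T)
    (hsub : ∀ S T : Finset (Fin n), f (S ∩ T) + f (S ∪ T) ≤ f S + f T)
    (i : Fin n) :
    f {i, i + ⟨1, by omega⟩} + ∑ j ∈ Finset.univ \ {i, i + ⟨1, by omega⟩}, f {j}
      ≤ ∑ j ∈ Finset.univ \ {i}, f {j, j + ⟨1, by omega⟩} := by
  haveI : NeZero n := ⟨by omega⟩
  have hone : (⟨1, by omega⟩ : Fin n) = 1 := by
    ext
    rw [Fin.val_one']
    exact (Nat.mod_eq_of_lt (by omega)).symm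
  rw [hone]
  -- values of casts
  have hval : ∀ k : ℕ, k < n → ((k : Fin n) : ℕ) = k := by
    intro k hk
    rw [Fin.val_natCast]
    exact Nat.mod_eq_of_lt hk
  have hv1 : ((1 : Fin n) : ℕ) = 1 := by
    rw [Fin.val_one']; exact Nat.mod_eq_of_lt (by omega)
  -- triangle lemma
  have tri : ∀ a b c : Fin n, a ≠ b → b ≠ c → a ≠ c →
      f {a, c} + f {b} ≤ f {a, b} + f {b, c} := by
    intro a b c hab hbc hac
    have h1 : ({a, b} : Finset (Fin n)) ∩ {b, c} = {b} := by
      ext x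
      simp only [Finset.mem_inter, Finset.mem_insert, Finset.mem_singleton]
      constructor
      · rintro ⟨h1 | h1, h2 | h2⟩ <;> simp_all
      · rintro rfl; simp
    have h2 : ({a, c} : Finset (Fin n)) ⊆ {a, b} ∪ {b, c} := by
      intro x hx
      simp only [Finset.mem_insert, Finset.mem_singleton] at hx
      simp only [Finset.mem_union, Finset.mem_insert, Finset.mem_singleton]
      tauto
    have h3 := hsub {a, b} {b, c}
    rw [h1] at h3
    have h4 := hmono _ _ h2
    linarith
  -- main induction around the cycle
  have key : ∀ m, 2 ≤ m → m ≤ n →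
      f {i + 1, i + (m : Fin n)} + ∑ k ∈ Finset.Ico 2 m, f {i + (k : Fin n)}
        ≤ ∑ k ∈ Finset.Ico 1 m, f {i + (k : Fin n), i + (k : Fin n) + 1} := by
    intro m
    induction m with
    | zero => intro h; omega
    | succ m ih =>
      intro h2 hle
      rcases Nat.lt_or_ge m 2 with h | h
      · -- m + 1 = 2
        have hm1 : m = 1 := by omega
        subst hm1
        simp only [Finset.Ico_self, Finset.sum_empty, add_zero,
          show Finset.Ico 1 2 = {1} by decide, Finset.sum_singleton, Nat.cast_one]
        have : ((2 : ℕ) : Fin n) = (1 : Fin n) + 1 := by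
          ext; rw [Fin.val_add, hv1, hval 2 (by omega)]; exact (Nat.mod_eq_of_lt (by omega)).symm
        rw [this, ← add_assoc]
      · have ih' := ih h (by omega)
        rw [Finset.sum_Ico_succ_top (by omega), Finset.sum_Ico_succ_top (by omega)]
        have hc : ((m + 1 : ℕ) : Fin n) = (m : Fin n) + 1 := by push_cast; ring
        have hd1 : i + 1 ≠ i + (m : Fin n) := by
          intro hcontra
          have := add_left_cancel hcontra
          have hv := congrArg Fin.val this
          rw [hv1, hval m (by omega)] at hv
          omega
        have hd2 : i + (m : Fin n) ≠ i + (m : Fin n) + 1 := by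
          intro hcontra
          have : (0 : Fin n) = 1 := by
            have := congrArg (fun x => x - (i + (m : Fin n))) hcontra
            simpa [add_sub_cancel_left] using this
          have hv := congrArg Fin.val this
          rw [hv1] at hv
          simp at hv
        have hd3 : i + 1 ≠ i + (m : Fin n) + 1 := by
          intro hcontra
          rw [add_assoc] at hcontra
          have := add_left_cancel hcontra
          have hv := congrArg Fin.val this
          rw [hv1, ← hc, Fin.val_natCast] at hv
          rcases Nat.lt_or_ge (m + 1) n with h' | h'
          · rw [Nat.mod_eq_of_lt h'] at hv; omega
          · have : m + 1 = n := by omega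
            rw [this, Nat.mod_self] at hv; omega
        have htri := tri (i + 1) (i + (m : Fin n)) (i + (m : Fin n) + 1) hd1 hd2 hd3
        rw [hc, show i + ((m : Fin n) + 1) = i + (m : Fin n) + 1 from
          (add_assoc i (m : Fin n) 1).symm]
        linarith
  have keyn := key n (by omega) le_rfl
  have hn0 : ((n : ℕ) : Fin n) = 0 := Fin.natCast_self n
  rw [hn0, add_zero, Finset.pair_comm] at keyn
  -- reindex the sums
  have hinj : ∀ a : ℕ, Set.InjOn (fun k : ℕ => i + (k : Fin n)) (Finset.Ico a n) := by
    intro a k1 hk1 k2 hk2 heq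
    simp only [Finset.coe_Ico, Set.mem_Ico] at hk1 hk2
    have := add_left_cancel heq
    have hv := congrArg Fin.val this
    rw [hval k1 hk1.2, hval k2 hk2.2] at hv
    exact hv
  have hii1 : i ≠ i + 1 := by
    intro hcontra
    have : (0 : Fin n) = 1 := by
      have := congrArg (fun x => x - i) hcontra
      simpa [add_sub_cancel_left] using this
    have hv := congrArg Fin.val this
    rw [hv1] at hv
    simp at hv
  have himg2 : Finset.image (fun k : ℕ => i + (k : Fin n)) (Finset.Ico 2 n)
      = Finset.univ \ {i, i + 1} := by
    apply Finset.eq_of_subset_of_card_le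
    · intro x hx
      simp only [Finset.mem_image, Finset.mem_Ico] at hx
      obtain ⟨k, ⟨hk2, hkn⟩, rfl⟩ := hx
      simp only [Finset.mem_sdiff, Finset.mem_univ, Finset.mem_insert,
        Finset.mem_singleton, true_and]
      push_neg
      constructor
      · intro hcontra
        nth_rewrite 2 [show i = i + 0 from (add_zero i).symm] at hcontra
        have := add_left_cancel hcontra
        have hv := congrArg Fin.val this
        rw [hval k hkn] at hv
        simp at hv
        omega
      · intro hcontra
        have := add_left_cancel hcontra
        have hv := congrArg Fin.val this
        rw [hval k hkn, hv1] at hv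
        omega
    · rw [Finset.card_sdiff_of_subset (Finset.subset_univ _),
        Finset.card_image_of_injOn (hinj 2), Nat.card_Ico, Finset.card_univ,
        Fintype.card_fin, Finset.card_insert_of_notMem (by simpa using hii1),
        Finset.card_singleton]
  have himg1 : Finset.image (fun k : ℕ => i + (k : Fin n)) (Finset.Ico 1 n)
      = Finset.univ \ {i} := by
    apply Finset.eq_of_subset_of_card_le
    · intro x hx
      simp only [Finset.mem_image, Finset.mem_Ico] at hx
      obtain ⟨k, ⟨hk1, hkn⟩, rfl⟩ := hx
      simp only [Finset.mem_sdiff, Finset.mem_univ, Finset.mem_singleton, true_and]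
      intro hcontra
      nth_rewrite 2 [show i = i + 0 from (add_zero i).symm] at hcontra
      have := add_left_cancel hcontra
      have hv := congrArg Fin.val this
      rw [hval k hkn] at hv
      simp at hv
      omega
    · rw [Finset.card_sdiff_of_subset (Finset.subset_univ _),
        Finset.card_image_of_injOn (hinj 1), Nat.card_Ico, Finset.card_univ,
        Fintype.card_fin, Finset.card_singleton]
  have hsum2 : ∑ j ∈ Finset.univ \ {i, i + 1}, f {j}
      = ∑ k ∈ Finset.Ico 2 n, f {i + (k : Fin n)} := by
    rw [← himg2, Finset.sum_image (fun k hk k' hk' => hinj 2 (by simpa using hk) (by simpa using hk'))]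
  have hsum1 : ∑ j ∈ Finset.univ \ {i}, f {j, j + 1}
      = ∑ k ∈ Finset.Ico 1 n, f {i + (k : Fin n), i + (k : Fin n) + 1} := by
    rw [← himg1, Finset.sum_image (fun k hk k' hk' => hinj 1 (by simpa using hk) (by simpa using hk'))]
  rw [hsum2, hsum1]
  exact keyn
end

section
/- Let (A_i)_{i∈ℤ} be a stationary discrete-time stochastic process with finite state space, so that H(A_j) = H(A_1) and I(A_j : A_{j+1}) = I(A_1 : A_2) for all j. Then for every n ≥ 2, I(A_1 : A_n) ≥ H(A_1) − (n−1)·H(A_2 | A_1), where I(X:Y) = H(X)+H(Y)−H(X,Y) and H(Y|X) = H(X,Y)−H(X). -/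
set_option linter.unusedSectionVars false

/-- Shannon entropy (in bits) of the distribution of the random variable `X`
on a finite probability space with probability mass function `p`. -/
noncomputable def ent {Ω α : Type*} [Fintype Ω] [Fintype α] [DecidableEq α]
    (p : Ω → ℝ) (X : Ω → α) : ℝ :=
  (∑ a : α, Real.negMulLog (∑ ω ∈ Finset.univ.filter (fun ω => X ω = a), p ω)) / Real.log 2

section Aux

variable {Ω α β γ : Type*} [Fintype Ω] [Fintype α] [Fintype β] [Fintype γ]
  [DecidableEq α] [DecidableEq β] [DecidableEq γ]

noncomputable def pm (p : Ω → ℝ) (X : Ω → α) (a : α) : ℝ :=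
  ∑ ω ∈ Finset.univ.filter (fun ω => X ω = a), p ω

lemma ent_eq_pm (p : Ω → ℝ) (X : Ω → α) :
    ent p X = (∑ a : α, Real.negMulLog (pm p X a)) / Real.log 2 := rfl

lemma pm_nonneg {p : Ω → ℝ} (hp : ∀ ω, 0 ≤ p ω) (X : Ω → α) (a : α) : 0 ≤ pm p X a :=
  Finset.sum_nonneg fun ω _ => hp ω

lemma sum_pm (p : Ω → ℝ) (X : Ω → α) : ∑ a, pm p X a = ∑ ω, p ω :=
  Finset.sum_fiberwise _ _ _

lemma pm_marg_snd (p : Ω → ℝ) (X : Ω → α) (Y : Ω → β) (b : β) :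
    ∑ a, pm p (fun ω => (X ω, Y ω)) (a, b) = pm p Y b := by
  unfold pm
  rw [← Finset.sum_fiberwise (Finset.univ.filter fun ω => Y ω = b) X p]
  refine Finset.sum_congr rfl fun a _ => Finset.sum_congr ?_ fun _ _ => rfl
  rw [Finset.filter_filter]
  exact Finset.filter_congr fun ω _ => by simp [Prod.ext_iff, and_comm]

lemma pm_marg_mid (p : Ω → ℝ) (X : Ω → α) (Y : Ω → β) (Z : Ω → γ) (a : α) (c : γ) :
    ∑ b, pm p (fun ω => (X ω, Y ω, Z ω)) (a, b, c) = pm p (fun ω => (X ω, Z ω)) (a, c) := by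
  unfold pm
  rw [← Finset.sum_fiberwise (Finset.univ.filter fun ω => (X ω, Z ω) = (a, c)) Y p]
  refine Finset.sum_congr rfl fun b _ => Finset.sum_congr ?_ fun _ _ => rfl
  rw [Finset.filter_filter]
  exact Finset.filter_congr fun ω _ => by simp [Prod.ext_iff]; tauto

lemma pm_marg_last (p : Ω → ℝ) (X : Ω → α) (Y : Ω → β) (Z : Ω → γ) (a : α) (b : β) :
    ∑ c, pm p (fun ω => (X ω, Y ω, Z ω)) (a, b, c) = pm p (fun ω => (X ω, Y ω)) (a, b) := by
  unfold pm
  rw [← Finset.sum_fiberwise (Finset.univ.filter fun ω => (X ω, Y ω) = (a, b)) Z p]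
  refine Finset.sum_congr rfl fun c _ => Finset.sum_congr ?_ fun _ _ => rfl
  rw [Finset.filter_filter]
  exact Finset.filter_congr fun ω _ => by simp [Prod.ext_iff]; tauto

lemma pm_marg_first (p : Ω → ℝ) (X : Ω → α) (Y : Ω → β) (Z : Ω → γ) (b : β) (c : γ) :
    ∑ a, pm p (fun ω => (X ω, Y ω, Z ω)) (a, b, c) = pm p (fun ω => (Y ω, Z ω)) (b, c) := by
  unfold pm
  rw [← Finset.sum_fiberwise (Finset.univ.filter fun ω => (Y ω, Z ω) = (b, c)) X p]
  refine Finset.sum_congr rfl fun a _ => Finset.sum_congr ?_ fun _ _ => rfl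
  rw [Finset.filter_filter]
  exact Finset.filter_congr fun ω _ => by simp [Prod.ext_iff]; tauto

/-- Subadditivity of `negMulLog` on sums of nonnegative reals. -/
lemma negMulLog_sum_le {ι : Type*} (s : Finset ι) (f : ι → ℝ) (hf : ∀ i ∈ s, 0 ≤ f i) :
    Real.negMulLog (∑ i ∈ s, f i) ≤ ∑ i ∈ s, Real.negMulLog (f i) := by
  calc Real.negMulLog (∑ i ∈ s, f i)
      = ∑ i ∈ s, -(f i * Real.log (∑ j ∈ s, f j)) := by
        rw [Real.negMulLog, neg_mul, Finset.sum_mul, ← Finset.sum_neg_distrib]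
    _ ≤ ∑ i ∈ s, Real.negMulLog (f i) := by
        refine Finset.sum_le_sum fun i hi => ?_
        rcases (hf i hi).eq_or_lt with h | h
        · simp [← h, Real.negMulLog]
        · rw [Real.negMulLog, neg_mul, neg_le_neg_iff]
          exact mul_le_mul_of_nonneg_left
            (Real.log_le_log h (Finset.single_le_sum hf hi)) (hf i hi)

/-- Key pointwise estimate: `x log(x/r) ≥ x - r` where `r = u*v/w`. -/
lemma key_pointwise {x u v w : ℝ} (hx : 0 ≤ x) (hu : x ≤ u) (hv : x ≤ v) (hw : v ≤ w) :
    x - u * v / w ≤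
      x * Real.log x + x * Real.log w - x * Real.log u - x * Real.log v := by
  rcases hx.eq_or_lt with h | h
  · have hu0 : 0 ≤ u := h ▸ hu
    have hv0 : 0 ≤ v := h ▸ hv
    have hw0 : 0 ≤ w := hv0.trans hw
    have : 0 ≤ u * v / w := div_nonneg (mul_nonneg hu0 hv0) hw0
    simp [← h]
    linarith
  · have hu0 : 0 < u := h.trans_le hu
    have hv0 : 0 < v := h.trans_le hv
    have hw0 : 0 < w := hv0.trans_le hw
    have hr : 0 < u * v / w := div_pos (mul_pos hu0 hv0) hw0
    have hlog : Real.log ((u * v / w) / x) ≤ (u * v / w) / x - 1 :=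
      Real.log_le_sub_one_of_pos (div_pos hr h)
    have heq : Real.log ((u * v / w) / x)
        = Real.log u + Real.log v - Real.log w - Real.log x := by
      rw [Real.log_div (ne_of_gt hr) (ne_of_gt h), Real.log_div (by positivity) (ne_of_gt hw0),
        Real.log_mul (ne_of_gt hu0) (ne_of_gt hv0)]
    rw [heq] at hlog
    have hxne : x ≠ 0 := ne_of_gt h
    have h2 : x * ((u * v / w) / x - 1) = u * v / w - x := by field_simp
    nlinarith [mul_le_mul_of_nonneg_left hlog hx]

lemma sum_rot (f : α → β → γ → ℝ) :
    ∑ a, ∑ b, ∑ c, f a b c = ∑ b, ∑ c, ∑ a, f a b c := by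
  rw [Finset.sum_comm]
  exact Finset.sum_congr rfl fun b _ => Finset.sum_comm

/-- Gibbs / nonnegativity of conditional mutual information, at the pmf level. -/
lemma gibbs (q : α → β → γ → ℝ) (hq : ∀ a b c, 0 ≤ q a b c)
    (hq1 : ∑ a, ∑ b, ∑ c, q a b c = 1) :
    (∑ a, ∑ b, ∑ c, Real.negMulLog (q a b c)) + ∑ b, Real.negMulLog (∑ a, ∑ c, q a b c)
      ≤ (∑ a, ∑ b, Real.negMulLog (∑ c, q a b c))
        + ∑ b, ∑ c, Real.negMulLog (∑ a, q a b c) := by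
  set m12 : α → β → ℝ := fun a b => ∑ c, q a b c with hm12
  set m23 : β → γ → ℝ := fun b c => ∑ a, q a b c with hm23
  set m2 : β → ℝ := fun b => ∑ a, ∑ c, q a b c with hm2
  have hm12nn : ∀ a b, 0 ≤ m12 a b := fun a b => Finset.sum_nonneg fun c _ => hq a b c
  have hm23nn : ∀ b c, 0 ≤ m23 b c := fun b c => Finset.sum_nonneg fun a _ => hq a b c
  have hm2nn : ∀ b, 0 ≤ m2 b := fun b => Finset.sum_nonneg fun a _ => hm12nn a b
  have hqle12 : ∀ a b c, q a b c ≤ m12 a b :=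
    fun a b c => Finset.single_le_sum (fun c _ => hq a b c) (Finset.mem_univ c)
  have hqle23 : ∀ a b c, q a b c ≤ m23 b c :=
    fun a b c => Finset.single_le_sum (fun a _ => hq a b c) (Finset.mem_univ a)
  have h23le2 : ∀ b c, m23 b c ≤ m2 b := by
    intro b c
    exact Finset.sum_le_sum fun a _ =>
      Finset.single_le_sum (fun c _ => hq a b c) (Finset.mem_univ c)
  have E1 : ∑ a, ∑ b, Real.negMulLog (m12 a b)
      = ∑ a, ∑ b, ∑ c, -(q a b c * Real.log (m12 a b)) := by
    refine Finset.sum_congr rfl fun a _ => Finset.sum_congr rfl fun b _ => ?_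
    rw [Real.negMulLog, neg_mul, hm12, Finset.sum_mul, ← Finset.sum_neg_distrib]
  have E2 : ∑ b, ∑ c, Real.negMulLog (m23 b c)
      = ∑ a, ∑ b, ∑ c, -(q a b c * Real.log (m23 b c)) := by
    rw [sum_rot]
    refine Finset.sum_congr rfl fun b _ => Finset.sum_congr rfl fun c _ => ?_
    rw [Real.negMulLog, neg_mul, hm23, Finset.sum_mul, ← Finset.sum_neg_distrib]
  have E3 : ∑ b, Real.negMulLog (m2 b)
      = ∑ a, ∑ b, ∑ c, -(q a b c * Real.log (m2 b)) := by
    rw [Finset.sum_comm]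
    refine Finset.sum_congr rfl fun b _ => ?_
    rw [Real.negMulLog, neg_mul, hm2, Finset.sum_mul, ← Finset.sum_neg_distrib]
    refine Finset.sum_congr rfl fun a _ => ?_
    rw [Finset.sum_mul, ← Finset.sum_neg_distrib]
  have hkey : ∑ a, ∑ b, ∑ c, (q a b c - m12 a b * m23 b c / m2 b)
      ≤ ∑ a, ∑ b, ∑ c, (q a b c * Real.log (q a b c) + q a b c * Real.log (m2 b)
          - q a b c * Real.log (m12 a b) - q a b c * Real.log (m23 b c)) := by
    refine Finset.sum_le_sum fun a _ => Finset.sum_le_sum fun b _ =>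
      Finset.sum_le_sum fun c _ => ?_
    exact key_pointwise (hq a b c) (hqle12 a b c) (hqle23 a b c) (h23le2 b c)
  have hrsum : ∑ a, ∑ b, ∑ c, m12 a b * m23 b c / m2 b ≤ 1 := by
    rw [Finset.sum_comm]
    have hone : ∑ b, m2 b = 1 := by rw [hm2]; rw [Finset.sum_comm]; exact hq1
    calc ∑ b, ∑ a, ∑ c, m12 a b * m23 b c / m2 b
        = ∑ b, (∑ a, m12 a b) * (∑ c, m23 b c) / m2 b := by
          refine Finset.sum_congr rfl fun b _ => ?_
          rw [Finset.sum_mul, Finset.sum_div]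
          refine Finset.sum_congr rfl fun a _ => ?_
          rw [Finset.mul_sum, Finset.sum_div]
      _ = ∑ b, m2 b * m2 b / m2 b := by
          refine Finset.sum_congr rfl fun b _ => ?_
          have h1 : ∑ a, m12 a b = m2 b := rfl
          have h2 : ∑ c, m23 b c = m2 b := by
            rw [hm23, hm2]; exact Finset.sum_comm
          rw [h1, h2]
      _ ≤ ∑ b, m2 b := by
          refine Finset.sum_le_sum fun b _ => ?_
          rcases (hm2nn b).eq_or_lt with h | h
          · rw [← h]; simp
          · rw [mul_div_assoc, div_self (ne_of_gt h), mul_one]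
      _ = 1 := hone
  have hsplit : ∑ a, ∑ b, ∑ c, (q a b c * Real.log (q a b c) + q a b c * Real.log (m2 b)
          - q a b c * Real.log (m12 a b) - q a b c * Real.log (m23 b c))
      = (∑ a, ∑ b, ∑ c, q a b c * Real.log (q a b c))
        + (∑ a, ∑ b, ∑ c, q a b c * Real.log (m2 b))
        - (∑ a, ∑ b, ∑ c, q a b c * Real.log (m12 a b))
        - (∑ a, ∑ b, ∑ c, q a b c * Real.log (m23 b c)) := by
    simp [Finset.sum_add_distrib, Finset.sum_sub_distrib]
  have hqlog : ∑ a, ∑ b, ∑ c, Real.negMulLog (q a b c)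
      = -∑ a, ∑ b, ∑ c, q a b c * Real.log (q a b c) := by
    simp [Real.negMulLog_eq_neg, Finset.sum_neg_distrib]
  have hleft : ∑ a, ∑ b, ∑ c, (q a b c - m12 a b * m23 b c / m2 b)
      = 1 - ∑ a, ∑ b, ∑ c, m12 a b * m23 b c / m2 b := by
    simp [Finset.sum_sub_distrib, hq1]
  have hE1 : ∑ a, ∑ b, ∑ c, -(q a b c * Real.log (m12 a b))
      = -∑ a, ∑ b, ∑ c, q a b c * Real.log (m12 a b) := by
    simp [Finset.sum_neg_distrib]
  have hE2 : ∑ a, ∑ b, ∑ c, -(q a b c * Real.log (m23 b c))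
      = -∑ a, ∑ b, ∑ c, q a b c * Real.log (m23 b c) := by
    simp [Finset.sum_neg_distrib]
  have hE3 : ∑ a, ∑ b, ∑ c, -(q a b c * Real.log (m2 b))
      = -∑ a, ∑ b, ∑ c, q a b c * Real.log (m2 b) := by
    simp [Finset.sum_neg_distrib]
  rw [E1, E2, E3, hE1, hE2, hE3, hqlog]
  rw [hsplit, hleft] at hkey
  linarith

/-- Triangle inequality `H(X,Z) + H(Y) ≤ H(X,Y) + H(Y,Z)`. -/
lemma ent_triangle (p : Ω → ℝ) (hp : ∀ ω, 0 ≤ p ω) (hs : ∑ ω, p ω = 1)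
    (X : Ω → α) (Y : Ω → β) (Z : Ω → γ) :
    ent p (fun ω => (X ω, Z ω)) + ent p Y
      ≤ ent p (fun ω => (X ω, Y ω)) + ent p (fun ω => (Y ω, Z ω)) := by
  have hlog2 : (0:ℝ) < Real.log 2 := Real.log_pos one_lt_two
  set q : α → β → γ → ℝ := fun a b c => pm p (fun ω => (X ω, Y ω, Z ω)) (a, b, c) with hqdef
  have hqnn : ∀ a b c, 0 ≤ q a b c := fun a b c => pm_nonneg hp _ _
  have hq1 : ∑ a, ∑ b, ∑ c, q a b c = 1 := by
    have h := sum_pm p (fun ω => (X ω, Y ω, Z ω))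
    rw [hs] at h
    rw [← h, Fintype.sum_prod_type]
    exact Finset.sum_congr rfl fun a _ =>
      (Fintype.sum_prod_type (fun y : β × γ => pm p (fun ω => (X ω, Y ω, Z ω)) (a, y))).symm
  rw [ent_eq_pm, ent_eq_pm, ent_eq_pm, ent_eq_pm, ← add_div, ← add_div,
    div_le_div_iff_of_pos_right hlog2]
  have hXZ : ∑ ac : α × γ, Real.negMulLog (pm p (fun ω => (X ω, Z ω)) ac)
      ≤ ∑ a, ∑ b, ∑ c, Real.negMulLog (q a b c) := by
    rw [Fintype.sum_prod_type]
    have step : ∀ a, ∑ c, Real.negMulLog (pm p (fun ω => (X ω, Z ω)) (a, c))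
        ≤ ∑ c, ∑ b, Real.negMulLog (q a b c) := by
      intro a
      refine Finset.sum_le_sum fun c _ => ?_
      rw [← pm_marg_mid p X Y Z a c]
      exact negMulLog_sum_le _ _ fun b _ => pm_nonneg hp _ _
    calc ∑ a, ∑ c, Real.negMulLog (pm p (fun ω => (X ω, Z ω)) (a, c))
        ≤ ∑ a, ∑ c, ∑ b, Real.negMulLog (q a b c) := Finset.sum_le_sum fun a _ => step a
      _ = ∑ a, ∑ b, ∑ c, Real.negMulLog (q a b c) :=
          Finset.sum_congr rfl fun a _ => Finset.sum_comm
  have hY : ∀ b, ∑ a, ∑ c, q a b c = pm p Y b := by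
    intro b
    calc ∑ a, ∑ c, q a b c = ∑ a, pm p (fun ω => (X ω, Y ω)) (a, b) :=
          Finset.sum_congr rfl fun a _ => pm_marg_last p X Y Z a b
      _ = pm p Y b := pm_marg_snd p X Y b
  have hXY : ∑ ab : α × β, Real.negMulLog (pm p (fun ω => (X ω, Y ω)) ab)
      = ∑ a, ∑ b, Real.negMulLog (∑ c, q a b c) := by
    rw [Fintype.sum_prod_type]
    exact Finset.sum_congr rfl fun a _ => Finset.sum_congr rfl fun b _ => by
      rw [pm_marg_last p X Y Z a b]
  have hYZ : ∑ bc : β × γ, Real.negMulLog (pm p (fun ω => (Y ω, Z ω)) bc)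
      = ∑ b, ∑ c, Real.negMulLog (∑ a, q a b c) := by
    rw [Fintype.sum_prod_type]
    exact Finset.sum_congr rfl fun b _ => Finset.sum_congr rfl fun c _ => by
      rw [pm_marg_first p X Y Z b c]
  calc (∑ ac : α × γ, Real.negMulLog (pm p (fun ω => (X ω, Z ω)) ac))
        + ∑ b, Real.negMulLog (pm p Y b)
      ≤ (∑ a, ∑ b, ∑ c, Real.negMulLog (q a b c))
        + ∑ b, Real.negMulLog (∑ a, ∑ c, q a b c) :=
        add_le_add hXZ (le_of_eq (Finset.sum_congr rfl fun b _ => by rw [hY b]))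
    _ ≤ (∑ a, ∑ b, Real.negMulLog (∑ c, q a b c))
        + ∑ b, ∑ c, Real.negMulLog (∑ a, q a b c) := gibbs q hqnn hq1
    _ = _ := by rw [hXY, hYZ]

end Aux

/-- Decay of correlations in a stationary stochastic process:
`I(A₁ : Aₙ) ≥ H(A₁) - (n-1) · H(A₂ | A₁)`. -/
theorem stationary_process_correlation_bound {Ω α : Type*} [Fintype Ω]
    [Fintype α] [DecidableEq α]
    (p : Ω → ℝ) (hp : ∀ ω, 0 ≤ p ω) (hs : ∑ ω, p ω = 1)
    (A : ℤ → Ω → α)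
    -- stationarity: H(A_j) = H(A_1) for all j
    (hH : ∀ j : ℤ, ent p (A j) = ent p (A 1))
    -- stationarity: I(A_j : A_{j+1}) = I(A_1 : A_2) for all j
    (hI : ∀ j : ℤ,
      ent p (A j) + ent p (A (j + 1)) - ent p (fun ω => (A j ω, A (j + 1) ω))
        = ent p (A 1) + ent p (A 2) - ent p (fun ω => (A 1 ω, A 2 ω)))
    (n : ℕ) (hn : 2 ≤ n) :
    ent p (A 1) + ent p (A n) - ent p (fun ω => (A 1 ω, A n ω))
      ≥ ent p (A 1)
        - ((n : ℝ) - 1) * (ent p (fun ω => (A 1 ω, A 2 ω)) - ent p (A 1)) := by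
  set h := ent p (A 1) with hh
  set P := ent p (fun ω => (A 1 ω, A 2 ω)) with hP
  have hpair : ∀ j : ℤ, ent p (fun ω => (A j ω, A (j + 1) ω)) = P := by
    intro j
    have h1 := hI j
    rw [hH j, hH (j + 1)] at h1
    rw [hH 2] at h1
    linarith
  -- main induction
  have claim : ∀ k : ℕ, ent p (fun ω => (A 1 ω, A (2 + (k : ℤ)) ω)) - h
      ≤ ((k : ℝ) + 1) * (P - h) := by
    intro k
    induction k with
    | zero =>
      have : ((2 : ℤ) + (0 : ℕ)) = 2 := by norm_num
      rw [this]
      have h2 : ent p (fun ω => (A 1 ω, A 2 ω)) = P := hP.symm ▸ rfl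
      rw [h2]
      norm_num
    | succ k ih =>
      have hidx : ((2 : ℤ) + ((k : ℕ) + 1 : ℕ)) = (2 + (k : ℤ)) + 1 := by push_cast; ring
      rw [hidx]
      have htri := ent_triangle p hp hs (A 1) (A (2 + (k : ℤ))) (A ((2 + (k : ℤ)) + 1))
      have hY : ent p (A (2 + (k : ℤ))) = h := hH _
      have hYZ : ent p (fun ω => (A (2 + (k : ℤ)) ω, A ((2 + (k : ℤ)) + 1) ω)) = P :=
        hpair (2 + (k : ℤ))
      rw [hY, hYZ] at htri
      push_cast
      nlinarith [htri, ih]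
  -- conclude
  have hk : (2 : ℤ) + ((n - 2 : ℕ) : ℤ) = (n : ℤ) := by
    have : (2 : ℕ) ≤ n := hn
    omega
  have hcl := claim (n - 2)
  rw [hk] at hcl
  have hcast : (((n - 2 : ℕ) : ℝ) + 1) = (n : ℝ) - 1 := by
    have : (2 : ℕ) ≤ n := hn
    push_cast [this]
    ring
  rw [hcast] at hcl
  have hAn : ent p (A (n : ℤ)) = h := hH _
  rw [hAn]
  linarith
end

section
/- Let M ⊆ 2^{[n]} be a marginal scenario (a nonempty collection of subsets of [n] closed under taking subsets, containing ∅), and let f : M → ℝ satisfy f(∅) = 0 and the submodularity condition f(S∩T) + f(S∪T) ≤ f(S) + f(T) for all S, T ∈ M with S∪T ∈ M. Then there exists a submodular function g : 2^{[n]} → ℝ with g(∅)=0 and g(S) = f(S) for all S ∈ M. -/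
open Classical in
/-- Auxiliary induction: extend a partial submodular function one set at a time. -/
lemma partial_submodular_extends_aux {n : ℕ} :
    ∀ k : ℕ, ∀ M : Set (Finset (Fin n)),
      (Finset.univ.filter (fun S => S ∉ M)).card ≤ k →
      (∀ S T : Finset (Fin n), S ∈ M → T ⊆ S → T ∈ M) →
      ∀ f : Finset (Fin n) → ℝ,
      (∀ S T : Finset (Fin n), S ∈ M → T ∈ M → S ∪ T ∈ M →
        f (S ∩ T) + f (S ∪ T) ≤ f S + f T) →
      ∃ g : Finset (Fin n) → ℝ,
        (∀ S T : Finset (Fin n), g (S ∩ T) + g (S ∪ T) ≤ g S + g T) ∧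
        ∀ S ∈ M, g S = f S := by
  intro k
  induction k with
  | zero =>
    intro M hcard hdc f hsub
    have hall : ∀ S : Finset (Fin n), S ∈ M := by
      intro S
      by_contra hS
      have : S ∈ Finset.univ.filter (fun S => S ∉ M) := by
        simp [hS]
      have := Finset.card_pos.mpr ⟨S, this⟩
      omega
    exact ⟨f, fun S T => hsub S T (hall S) (hall T) (hall _), fun S _ => rfl⟩
  | succ m ih =>
    intro M hcard hdc f hsub
    by_cases hall : ∀ S : Finset (Fin n), S ∈ M
    · exact ⟨f, fun S T => hsub S T (hall S) (hall T) (hall _), fun S _ => rfl⟩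
    · push_neg at hall
      -- pick a missing set U of minimal cardinality
      have hne : (Finset.univ.filter (fun S => S ∉ M)).Nonempty := by
        obtain ⟨S, hS⟩ := hall
        exact ⟨S, by simp [hS]⟩
      obtain ⟨U, hUmem, hUmin⟩ :=
        Finset.exists_min_image (Finset.univ.filter (fun S => S ∉ M)) Finset.card hne
      have hU : U ∉ M := by simpa using hUmem
      -- every proper subset of U is in M
      have hproper : ∀ T : Finset (Fin n), T ⊂ U → T ∈ M := by
        intro T hT
        by_contra hTM
        have hTmem : T ∈ Finset.univ.filter (fun S => S ∉ M) := by simp [hTM]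
        have := hUmin T hTmem
        have := Finset.card_lt_card hT
        omega
      -- the value assigned to U
      set pairs : Finset (Finset (Fin n) × Finset (Fin n)) :=
        Finset.univ.filter (fun p => p.1 ∈ M ∧ p.2 ∈ M ∧ p.1 ∪ p.2 = U) with hpairs
      set v : ℝ :=
        if h : pairs.Nonempty then
          (pairs.image (fun p => f p.1 + f p.2 - f (p.1 ∩ p.2))).min' (h.image _)
        else 0 with hv
      set f' : Finset (Fin n) → ℝ := Function.update f U v with hf'
      have hfix : ∀ S ∈ M, f' S = f S := by
        intro S hS
        have : S ≠ U := fun h => hU (h ▸ hS)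
        simp [hf', Function.update_of_ne this]
      have hfU : f' U = v := by simp [hf']
      have hvle : ∀ S T : Finset (Fin n), S ∈ M → T ∈ M → S ∪ T = U →
          v ≤ f S + f T - f (S ∩ T) := by
        intro S T hS hT hST
        have hpmem : (S, T) ∈ pairs := by simp [hpairs, hS, hT, hST]
        have hne' : pairs.Nonempty := ⟨_, hpmem⟩
        rw [hv, dif_pos hne']
        exact Finset.min'_le _ _ (Finset.mem_image_of_mem _ hpmem)
      -- extended family
      have hdc' : ∀ S T : Finset (Fin n), S ∈ insert U M → T ⊆ S → T ∈ insert U M := by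
        intro S T hS hTS
        rcases hS with rfl | hS
        · rcases eq_or_ne T S with rfl | hTne
          · exact Set.mem_insert _ _
          · exact Set.mem_insert_of_mem _ (hproper T ⟨hTS, fun h => hTne (le_antisymm hTS h)⟩)
        · exact Set.mem_insert_of_mem _ (hdc S T hS hTS)
      have hsub' : ∀ S T : Finset (Fin n), S ∈ insert U M → T ∈ insert U M →
          S ∪ T ∈ insert U M → f' (S ∩ T) + f' (S ∪ T) ≤ f' S + f' T := by
        intro S T hS hT hST
        -- helper: if one of them is U, the other is contained in U
        have key : ∀ A : Finset (Fin n), A ∈ insert U M → U ∪ A ∈ insert U M → A ⊆ U := by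
          intro A hA hUA
          rcases hUA with h | h
          · intro x hx
            have : x ∈ U ∪ A := Finset.mem_union_right _ hx
            rw [h] at this; exact this
          · exact absurd (hdc _ U h Finset.subset_union_left) hU
        rcases hS with rfl | hS
        · rcases hT with rfl | hT
          · simp
          · have hTU : T ⊆ S := key T (Set.mem_insert_of_mem _ hT) hST
            rw [Finset.inter_eq_right.mpr hTU, Finset.union_eq_left.mpr hTU]
            linarith
        · rcases hT with rfl | hT
          · have hSU : S ⊆ T := by
              have := key S (Set.mem_insert_of_mem _ hS)
                (by rwa [Finset.union_comm] at hST)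
              exact this
            rw [Finset.inter_eq_left.mpr hSU, Finset.union_eq_right.mpr hSU]
          · -- both S, T ∈ M
            have hSTne : S ∩ T ∈ M := hdc S _ hS Finset.inter_subset_left
            rw [hfix S hS, hfix T hT, hfix _ hSTne]
            rcases hST with h | h
            · -- S ∪ T = U
              rw [← h] at hfU
              rw [hfU]
              have := hvle S T hS hT h
              linarith
            · rw [hfix _ h]
              exact hsub S T hS hT h
      -- cardinality decreases
      have hcard' : (Finset.univ.filter (fun S => S ∉ insert U M)).card ≤ m := by
        have hss : Finset.univ.filter (fun S => S ∉ insert U M) ⊂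
            Finset.univ.filter (fun S => S ∉ M) := by
          constructor
          · intro S hS
            simp only [Finset.mem_filter, Finset.mem_univ, true_and] at hS ⊢
            exact fun h => hS (Set.mem_insert_of_mem _ h)
          · intro h
            have := h hUmem
            simp at this
        have := Finset.card_lt_card hss
        omega
      obtain ⟨g, hg1, hg2⟩ := ih (insert U M) (by convert hcard' using 2; congr!) hdc' f' hsub'
      exact ⟨g, hg1, fun S hS => (hg2 S (Set.mem_insert_of_mem _ hS)).trans (hfix S hS)⟩

/-- Every partial submodular function on a marginal scenario (a downward-closed
family of subsets) extends to a full submodular function. -/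
theorem partial_submodular_extends {n : ℕ} (M : Set (Finset (Fin n)))
    (hempty : (∅ : Finset (Fin n)) ∈ M)
    (hdc : ∀ S T : Finset (Fin n), S ∈ M → T ⊆ S → T ∈ M)
    (f : Finset (Fin n) → ℝ) (h0 : f ∅ = 0)
    (hsub : ∀ S T : Finset (Fin n), S ∈ M → T ∈ M → S ∪ T ∈ M →
      f (S ∩ T) + f (S ∪ T) ≤ f S + f T) :
    ∃ g : Finset (Fin n) → ℝ, g ∅ = 0 ∧
      (∀ S T : Finset (Fin n), g (S ∩ T) + g (S ∪ T) ≤ g S + g T) ∧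
      ∀ S ∈ M, g S = f S := by
  classical
  obtain ⟨g, hg1, hg2⟩ := partial_submodular_extends_aux
    (Finset.univ.filter (fun S => S ∉ M)).card M le_rfl hdc f hsub
  exact ⟨g, by rw [hg2 ∅ hempty, h0], hg1, hg2⟩
end

section
/- For any polymatroid f on [n] with n ≥ 4 and distinct indices 1,2,3,4 ∈ [n], the Braunstein–Caves inequality holds: f({1,4}) + f({2}) + f({3}) ≤ f({1,2}) + f({2,3}) + f({3,4}). -/
/-- The Braunstein–Caves inequality for polymatroids. -/
theorem braunstein_caves {n : ℕ} (hn : 4 ≤ n) (f : Finset (Fin n) → ℝ)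
    (h0 : f ∅ = 0) (hnn : ∀ S, 0 ≤ f S)
    (hmono : ∀ S T : Finset (Fin n), S ⊆ T → f S ≤ f T)
    (hsub : ∀ S T : Finset (Fin n), f (S ∩ T) + f (S ∪ T) ≤ f S + f T)
    (i1 i2 i3 i4 : Fin n) (h12 : i1 ≠ i2) (h13 : i1 ≠ i3) (h14 : i1 ≠ i4)
    (h23 : i2 ≠ i3) (h24 : i2 ≠ i4) (h34 : i3 ≠ i4) :
    f {i1, i4} + f {i2} + f {i3} ≤ f {i1, i2} + f {i2, i3} + f {i3, i4} := by
  have hA : ({i1, i2} : Finset (Fin n)) ∩ {i2, i3} = {i2} := by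
    ext x
    simp only [Finset.mem_inter, Finset.mem_insert, Finset.mem_singleton]
    constructor
    · rintro ⟨h | h, h' | h'⟩ <;> subst_vars <;> simp_all
    · rintro rfl; simp
  have hB : ({i1, i2, i3} : Finset (Fin n)) ∩ {i3, i4} = {i3} := by
    ext x
    simp only [Finset.mem_inter, Finset.mem_insert, Finset.mem_singleton]
    constructor
    · rintro ⟨h | h | h, h' | h'⟩ <;> subst_vars <;> simp_all
    · rintro rfl; simp
  have h1 := hsub {i1, i2} {i2, i3}
  rw [hA] at h1
  have hU : ({i1, i2} : Finset (Fin n)) ∪ {i2, i3} = {i1, i2, i3} := by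
    ext x; simp [Finset.mem_union, or_assoc]
  rw [hU] at h1
  have h2 := hsub {i1, i2, i3} {i3, i4}
  rw [hB] at h2
  have hU2 : ({i1, i2, i3} : Finset (Fin n)) ∪ {i3, i4} = {i1, i2, i3, i4} := by
    ext x; simp [Finset.mem_union, or_assoc]
  rw [hU2] at h2
  have h3 : f {i1, i4} ≤ f {i1, i2, i3, i4} := by
    apply hmono
    intro x hx
    simp only [Finset.mem_insert, Finset.mem_singleton] at hx ⊢
    tauto
  linarith
end
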